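/- Let H be a discrete abelian group, let f : H → ℂ be a positive definite function with f(0) = 1, and suppose L is a finite subgroup of H such that |f(y)| = 1 for all y ∈ L. Then the restriction of f to L is a character of L (i.e., f(y₁+y₂) = f(y₁)f(y₂) for y₁, y₂ ∈ L). -/

import Mathlib

open scoped ComplexOrder

/-- A function `f` on an abelian group is positive definite if all the usual
Hermitian quadratic sums are nonnegative (in the complex order). -/
def IsPositiveDefiniteFn {Y : Type*} [AddCommGroup Y] (f : Y → ℂ) : Prop :=
  ∀ (n : ℕ) (y : Fin n → Y) (c : Fin n → ℂ),
    0 ≤ ∑ i, ∑ j, c i * (starRingEnd ℂ) (c j) * f (y i - y j)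

/-- If `f` is positive definite on a discrete abelian group `H` with `f(0)=1`, and `L` is a
finite subgroup on which `|f| = 1`, then `f` restricted to `L` is a character. -/
theorem stmt8 {H : Type*} [AddCommGroup H] (f : H → ℂ)
    (hpd : IsPositiveDefiniteFn f)
    (h0 : f 0 = 1)
    (L : AddSubgroup H) (hLfin : (L : Set H).Finite)
    (habs : ∀ y ∈ L, ‖f y‖ = 1) :
    ∀ y₁ ∈ L, ∀ y₂ ∈ L, f (y₁ + y₂) = f y₁ * f y₂ := by
  have H2 : ∀ (z : H) (c : ℂ),
      0 ≤ c * (starRingEnd ℂ) c + c * f z + ((starRingEnd ℂ) c * f (-z) + 1) := by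
    intro z c
    have h := hpd 2 ![z, 0] ![c, 1]
    simpa [Fin.sum_univ_two, sub_self, sub_zero, zero_sub, h0] using h
  -- hermitian symmetry
  have herm : ∀ z : H, f (-z) = (starRingEnd ℂ) (f z) := by
    intro z
    have h1 := (Complex.nonneg_iff.mp (H2 z 1)).2
    have h2 := (Complex.nonneg_iff.mp (H2 z Complex.I)).2
    simp [Complex.add_im, Complex.mul_im, Complex.I_re, Complex.I_im,
      Complex.conj_re, Complex.conj_im, map_one, Complex.one_im, Complex.one_re] at h1 h2
    apply Complex.ext
    · simp [Complex.conj_re]; linarith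
    · simp [Complex.conj_im]; linarith
  -- bound
  have bound : ∀ z : H, Complex.normSq (f z) ≤ 1 := by
    intro z
    have h := H2 z (-(starRingEnd ℂ) (f z))
    rw [herm z] at h
    have he : -(starRingEnd ℂ) (f z) * (starRingEnd ℂ) (-(starRingEnd ℂ) (f z)) +
        -(starRingEnd ℂ) (f z) * f z + ((starRingEnd ℂ) (-(starRingEnd ℂ) (f z)) *
        (starRingEnd ℂ) (f z) + 1) = ((1 - Complex.normSq (f z) : ℝ) : ℂ) := by
      simp only [map_neg, Complex.conj_conj]
      push_cast
      linear_combination (-(1:ℂ)) * Complex.mul_conj (f z)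
    rw [he] at h
    have := (Complex.zero_le_real).mp h
    linarith
  have key : ∀ x y : H, Complex.normSq (f x) = 1 → Complex.normSq (f y) = 1 →
      f (x - y) = f x * (starRingEnd ℂ) (f y) := by
    intro x y hax hay
    set a := f x with ha
    set b := f y with hb
    set w := f (x - y) with hw
    have hna : a * (starRingEnd ℂ) a = 1 := by
      rw [Complex.mul_conj, hax]; norm_num
    have hnb : b * (starRingEnd ℂ) b = 1 := by
      rw [Complex.mul_conj, hay]; norm_num
    set r : ℝ := ((starRingEnd ℂ) a * b * w).re with hrdef
    have H3 : ∀ t : ℝ, (0:ℝ) ≤ 2*t^2 - 4*t + 1 + 2*t^2 * r := by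
      intro t
      have h := hpd 3 ![x, y, 0] ![(t:ℂ) * (starRingEnd ℂ) a, (t:ℂ) * (starRingEnd ℂ) b, -1]
      simp only [Fin.sum_univ_three, Matrix.cons_val_zero, Matrix.cons_val_one,
        Matrix.head_cons, Matrix.cons_val_two, Matrix.tail_cons, sub_self, sub_zero,
        zero_sub, h0, mul_one, map_mul, map_neg, map_one, Complex.conj_conj,
        Complex.conj_ofReal] at h
      have hyx : f (y - x) = (starRingEnd ℂ) w := by
        rw [show y - x = -(x - y) from (neg_sub x y).symm, herm]
      rw [hyx, herm x, herm y] at h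
      rw [← ha, ← hb, ← hw] at h
      have hr2 : (starRingEnd ℂ) a * b * w + a * (starRingEnd ℂ) b * (starRingEnd ℂ) w
          = ((2 * r : ℝ) : ℂ) := by
        have h' := Complex.add_conj ((starRingEnd ℂ) a * b * w)
        rw [map_mul, map_mul, Complex.conj_conj] at h'
        rw [← hrdef] at h'
        exact h'
      push_cast at hr2
      have he : (t:ℂ) * (starRingEnd ℂ) a * ((t:ℂ) * a) +
          (t:ℂ) * (starRingEnd ℂ) a * ((t:ℂ) * b) * w +
          (t:ℂ) * (starRingEnd ℂ) a * -1 * a +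
          ((t:ℂ) * (starRingEnd ℂ) b * ((t:ℂ) * a) * (starRingEnd ℂ) w +
            (t:ℂ) * (starRingEnd ℂ) b * ((t:ℂ) * b) +
            (t:ℂ) * (starRingEnd ℂ) b * -1 * b) +
          (-1 * ((t:ℂ) * a) * (starRingEnd ℂ) a + -1 * ((t:ℂ) * b) * (starRingEnd ℂ) b +
            -1 * -1) = (((2*t^2 - 4*t + 1 + 2*t^2 * r : ℝ)) : ℂ) := by
        push_cast
        linear_combination ((t:ℂ)^2 - 2*(t:ℂ)) * hna + ((t:ℂ)^2 - 2*(t:ℂ)) * hnb +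
          (t:ℂ)^2 * hr2
      rw [he] at h
      exact Complex.zero_le_real.mp h
    have hr1 : 1 ≤ r := by
      have := H3 (1/2)
      linarith
    have hn : Complex.normSq ((starRingEnd ℂ) a * b * w) ≤ 1 := by
      have hbw := bound (x - y)
      rw [← hw] at hbw
      simp only [Complex.normSq_mul, Complex.normSq_conj, hax, hay, one_mul]
      exact hbw
    have hz : (starRingEnd ℂ) a * b * w = 1 := by
      have hns := Complex.normSq_apply ((starRingEnd ℂ) a * b * w)
      rw [hns] at hn
      apply Complex.ext
      · simp only [Complex.one_re]
        nlinarith [sq_nonneg (((starRingEnd ℂ) a * b * w).im)]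
      · simp only [Complex.one_im]
        nlinarith [sq_nonneg (((starRingEnd ℂ) a * b * w).im)]
    linear_combination (a * (starRingEnd ℂ) b) * hz - (b * (starRingEnd ℂ) b * w) * hna
      - w * hnb
  intro y₁ h₁ y₂ h₂
  have hn1 : Complex.normSq (f y₁) = 1 := by
    rw [← Complex.sq_norm, habs y₁ h₁]; norm_num
  have hn2 : Complex.normSq (f (-y₂)) = 1 := by
    rw [herm, Complex.normSq_conj, ← Complex.sq_norm, habs y₂ h₂]; norm_num
  have := key y₁ (-y₂) hn1 hn2
  rw [sub_neg_eq_add, herm, Complex.conj_conj] at this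
  exact this
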